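/- Let m, k be positive integers and |q|<1. Then (1/2)·(∑_{x,y∈ℤ} q^{mx²+4ky²} − ∑_{x,y∈ℤ} q^{4mx²+4mxy+(k+m)y²}) = q^m · ψ(q^{8m}) · φ(−q^k), where ψ(q) = ∑_{n∈ℤ} q^{2n²−n} and φ(q) = ∑_{n∈ℤ} q^{n²}. -/

import Mathlib

open scoped BigOperators

noncomputable def E (q : ℂ) : ℂ := ∏' n : ℕ, (1 - q ^ (n + 1))

noncomputable def ramaf (a b : ℂ) : ℂ :=
  ∑' n : ℤ, a ^ (n * (n + 1) / 2) * b ^ (n * (n - 1) / 2)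

noncomputable def phi (q : ℂ) : ℂ := ∑' n : ℤ, q ^ (n ^ 2)

noncomputable def psi (q : ℂ) : ℂ := ∑' n : ℤ, q ^ (2 * n ^ 2 - n)

/-- Basic real summability lemma: any integer-exponent family whose exponents
dominate `|n| - 2` gives a summable geometric-type series. -/
lemma aux_summable_real {r : ℝ} (h0 : 0 < r) (h1 : r < 1) (e : ℤ → ℤ)
    (he : ∀ n, |n| - 2 ≤ e n) : Summable (fun n : ℤ => r ^ e n) := by
  have hgeom : Summable (fun n : ℕ => r ^ n) := summable_geometric_of_lt_one h0.le h1
  have hnat : Summable (fun n : ℤ => r ^ n.natAbs) := by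
    apply Summable.of_nat_of_neg <;> simpa using hgeom
  have hbase : Summable (fun n : ℤ => r ^ (|n| - 2)) := by
    have h2 : Summable (fun n : ℤ => r ^ (-2 : ℤ) * r ^ n.natAbs) := hnat.mul_left _
    refine h2.congr fun n => ?_
    rw [← zpow_natCast r n.natAbs, ← zpow_add₀ h0.ne']
    congr 1
    rw [Int.abs_eq_natAbs]
    omega
  refine Summable.of_nonneg_of_le (fun n => zpow_nonneg h0.le _)
    (fun n => zpow_le_zpow_right_of_le_one₀ h0 h1.le (he n)) hbase

lemma aux_summable_norm {q : ℂ} (hq0 : q ≠ 0) (hq : ‖q‖ < 1) (e : ℤ → ℤ)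
    (he : ∀ n, |n| - 2 ≤ e n) : Summable (fun n : ℤ => ‖q ^ e n‖) := by
  have := aux_summable_real (r := ‖q‖) (norm_pos_iff.mpr hq0) hq e he
  simpa [norm_zpow] using this

lemma he_sq {c : ℤ} (hc : 0 < c) : ∀ n : ℤ, |n| - 2 ≤ c * n ^ 2 := by
  intro n
  have h1 : |n| - 2 ≤ n ^ 2 := by
    rcases abs_cases n with ⟨h, _⟩ | ⟨h, _⟩ <;> nlinarith [sq_nonneg (n - 1), sq_nonneg (n + 1)]
  calc |n| - 2 ≤ n ^ 2 := h1
    _ ≤ c * n ^ 2 := le_mul_of_one_le_left (sq_nonneg n) (by omega)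

lemma he_A {m : ℤ} (hm : 0 < m) : ∀ n : ℤ, |n| - 2 ≤ 4 * m * (n ^ 2 + n) := by
  intro n
  have hnn : 0 ≤ n ^ 2 + n := by
    rcases le_or_gt 0 n with h | h
    · nlinarith
    · nlinarith
  have h1 : |n| - 2 ≤ n ^ 2 + n := by
    rcases abs_cases n with ⟨h, _⟩ | ⟨h, _⟩ <;> nlinarith [sq_nonneg (n + 1)]
  calc |n| - 2 ≤ n ^ 2 + n := h1
    _ ≤ 4 * m * (n ^ 2 + n) := le_mul_of_one_le_left hnn (by omega)

lemma he_psi {m : ℤ} (hm : 0 < m) : ∀ n : ℤ, |n| - 2 ≤ 8 * m * (2 * n ^ 2 - n) := by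
  intro n
  have hnn : 0 ≤ 2 * n ^ 2 - n := by
    rcases le_or_gt 0 n with h | h
    · nlinarith
    · nlinarith
  have h1 : |n| - 2 ≤ 2 * n ^ 2 - n := by
    rcases abs_cases n with ⟨h, _⟩ | ⟨h, _⟩ <;> nlinarith [sq_nonneg (n - 1), sq_nonneg (n + 1)]
  calc |n| - 2 ≤ 2 * n ^ 2 - n := h1
    _ ≤ 8 * m * (2 * n ^ 2 - n) := le_mul_of_one_le_left hnn (by omega)

theorem thm_4m (m k : ℤ) (hm : 0 < m) (hk : 0 < k) (q : ℂ) (hq : ‖q‖ < 1) :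
    (1 / 2 : ℂ) *
      ((∑' p : ℤ × ℤ, q ^ (m * p.1 ^ 2 + 4 * k * p.2 ^ 2)) -
        ∑' p : ℤ × ℤ, q ^ (4 * m * p.1 ^ 2 + 4 * m * p.1 * p.2 + (k + m) * p.2 ^ 2)) =
      q ^ m * psi (q ^ (8 * m)) * phi (-(q ^ k)) := by
  rcases eq_or_ne q 0 with rfl | hq0
  · -- q = 0 : both double sums are 1, and the RHS vanishes since 0^m = 0.
    have h1 : (∑' p : ℤ × ℤ, (0 : ℂ) ^ (m * p.1 ^ 2 + 4 * k * p.2 ^ 2)) = 1 := by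
      rw [tsum_eq_single (0, 0)]
      · norm_num
      · intro p hp
        apply zero_zpow
        intro h
        apply hp
        have hx : p.1 = 0 := by nlinarith [sq_nonneg p.1, sq_nonneg p.2, sq_abs p.1, abs_nonneg p.1]
        have hy : p.2 = 0 := by nlinarith [sq_nonneg p.1, sq_nonneg p.2, sq_abs p.2, abs_nonneg p.2]
        exact Prod.ext hx hy
    have h2 : (∑' p : ℤ × ℤ,
        (0 : ℂ) ^ (4 * m * p.1 ^ 2 + 4 * m * p.1 * p.2 + (k + m) * p.2 ^ 2)) = 1 := by
      rw [tsum_eq_single (0, 0)]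
      · norm_num
      · intro p hp
        apply zero_zpow
        intro h
        apply hp
        have hrw : m * (2 * p.1 + p.2) ^ 2 + k * p.2 ^ 2 = 0 := by linarith [h.symm.le, h.le,
          (by ring : 4 * m * p.1 ^ 2 + 4 * m * p.1 * p.2 + (k + m) * p.2 ^ 2
            = m * (2 * p.1 + p.2) ^ 2 + k * p.2 ^ 2)]
        have hy : p.2 = 0 := by nlinarith [sq_nonneg (2 * p.1 + p.2), sq_nonneg p.2]
        have hx : p.1 = 0 := by nlinarith [sq_nonneg (2 * p.1 + p.2), sq_nonneg p.2]
        exact Prod.ext hx hy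
    rw [h1, h2, zero_zpow m hm.ne']
    ring
  · -- q ≠ 0
    have hr0 : (0 : ℝ) < ‖q‖ := norm_pos_iff.mpr hq0
    -- summability facts
    have hFm : Summable (fun u : ℤ => ‖q ^ (m * u ^ 2)‖) :=
      aux_summable_norm hq0 hq _ (he_sq hm)
    have hFk : Summable (fun v : ℤ => ‖q ^ (k * v ^ 2)‖) :=
      aux_summable_norm hq0 hq _ (he_sq hk)
    have hFnorm : Summable (fun p : ℤ × ℤ => ‖q ^ (m * p.1 ^ 2 + k * p.2 ^ 2)‖) := by
      have := hFm.mul_norm hFk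
      refine this.congr fun p => ?_
      rw [← zpow_add₀ hq0]
    -- step 1 : first sum as a sum over pairs with even second coordinate
    have key1 : (∑' p : ℤ × ℤ, q ^ (m * p.1 ^ 2 + 4 * k * p.2 ^ 2)) =
        ∑' p : ℤ × ℤ, (if Even p.2 then q ^ (m * p.1 ^ 2 + k * p.2 ^ 2) else 0) := by
      have hinj : Function.Injective (fun p : ℤ × ℤ => ((p.1, 2 * p.2) : ℤ × ℤ)) := by
        intro a b h
        simp only [Prod.mk.injEq] at h
        exact Prod.ext h.1 (by omega)
      have hsupp : Function.support
          (fun p : ℤ × ℤ => (if Even p.2 then q ^ (m * p.1 ^ 2 + k * p.2 ^ 2) else 0)) ⊆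
          Set.range (fun p : ℤ × ℤ => ((p.1, 2 * p.2) : ℤ × ℤ)) := by
        intro p hp
        rw [Function.mem_support] at hp
        have hev : Even p.2 := by
          by_contra h
          simp [h] at hp
        obtain ⟨c, hc⟩ := hev
        exact ⟨(p.1, c), Prod.ext rfl (show 2 * c = p.2 by omega)⟩
      rw [← hinj.tsum_eq hsupp]
      refine tsum_congr fun p => ?_
      simp only []
      rw [if_pos ⟨p.2, by ring⟩]
      congr 1
      ring
    -- step 2 : second sum as a sum over pairs with coordinates of equal parity
    have key2 : (∑' p : ℤ × ℤ, q ^ (4 * m * p.1 ^ 2 + 4 * m * p.1 * p.2 + (k + m) * p.2 ^ 2)) =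
        ∑' p : ℤ × ℤ, (if Even (p.1 - p.2) then q ^ (m * p.1 ^ 2 + k * p.2 ^ 2) else 0) := by
      have hinj : Function.Injective (fun p : ℤ × ℤ => ((2 * p.1 + p.2, p.2) : ℤ × ℤ)) := by
        intro a b h
        simp only [Prod.mk.injEq] at h
        exact Prod.ext (by omega) h.2
      have hsupp : Function.support
          (fun p : ℤ × ℤ => (if Even (p.1 - p.2) then q ^ (m * p.1 ^ 2 + k * p.2 ^ 2) else 0)) ⊆
          Set.range (fun p : ℤ × ℤ => ((2 * p.1 + p.2, p.2) : ℤ × ℤ)) := by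
        intro p hp
        rw [Function.mem_support] at hp
        have hev : Even (p.1 - p.2) := by
          by_contra h
          simp [h] at hp
        obtain ⟨c, hc⟩ := hev
        exact ⟨(c, p.2), Prod.ext (show 2 * c + p.2 = p.1 by omega) rfl⟩
      rw [← hinj.tsum_eq hsupp]
      refine tsum_congr fun p => ?_
      simp only []
      rw [if_pos ⟨p.1, by ring⟩]
      congr 1
      ring
    -- summability of the two indicator sums
    have ht1 : Summable (fun p : ℤ × ℤ =>
        (if Even p.2 then q ^ (m * p.1 ^ 2 + k * p.2 ^ 2) else 0)) := by
      refine Summable.of_norm_bounded hFnorm fun p => ?_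
      split
      · exact le_refl _
      · simp only [norm_zero]; exact norm_nonneg _
    have ht2 : Summable (fun p : ℤ × ℤ =>
        (if Even (p.1 - p.2) then q ^ (m * p.1 ^ 2 + k * p.2 ^ 2) else 0)) := by
      refine Summable.of_norm_bounded hFnorm fun p => ?_
      split
      · exact le_refl _
      · simp only [norm_zero]; exact norm_nonneg _
    -- step 3 : subtract pointwise
    have key3 : (∑' p : ℤ × ℤ, (if Even p.2 then q ^ (m * p.1 ^ 2 + k * p.2 ^ 2) else 0)) -
        (∑' p : ℤ × ℤ, (if Even (p.1 - p.2) then q ^ (m * p.1 ^ 2 + k * p.2 ^ 2) else 0)) =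
        ∑' p : ℤ × ℤ, (if Odd p.1 then q ^ (m * p.1 ^ 2) else 0) * (-(q ^ k)) ^ (p.2 ^ 2) := by
      rw [← Summable.tsum_sub ht1 ht2]
      refine tsum_congr fun p => ?_
      rcases Int.even_or_odd p.1 with he1 | ho1
      · have hno : ¬ Odd p.1 := by simpa [Int.not_odd_iff_even] using he1
        have hiff : Even (p.1 - p.2) ↔ Even p.2 := by
          rw [Int.even_sub]
          exact ⟨fun h => h.mp he1, fun h => iff_of_true he1 h⟩
        rw [if_neg hno, zero_mul]
        by_cases hv : Even p.2
        · rw [if_pos hv, if_pos (hiff.mpr hv), sub_self]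
        · rw [if_neg hv, if_neg (fun h => hv (hiff.mp h)), sub_self]
      · have hyes : Odd p.1 := ho1
        have hne : ¬ Even p.1 := by simpa [Int.not_even_iff_odd] using ho1
        rw [if_pos hyes]
        by_cases hv : Even p.2
        · have hodd : ¬ Even (p.1 - p.2) := by
            rw [Int.even_sub]
            intro h
            exact hne (h.mpr hv)
          rw [if_pos hv, if_neg hodd, sub_zero]
          have hev2 : Even (p.2 ^ 2) := (Int.even_pow).mpr ⟨hv, two_ne_zero⟩
          rw [hev2.neg_zpow, ← zpow_mul, ← zpow_add₀ hq0]
        · have hodd : Even (p.1 - p.2) := by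
            rw [Int.even_sub]
            constructor
            · intro h; exact absurd h hne
            · intro h; exact absurd h hv
          rw [if_neg hv, if_pos hodd, zero_sub]
          have hov : Odd p.2 := Int.not_even_iff_odd.mp hv
          have hod2 : Odd (p.2 ^ 2) := hov.pow
          rw [hod2.neg_zpow, mul_neg, ← zpow_mul, ← zpow_add₀ hq0]
    -- step 4 : factor the double sum
    have hf_norm : Summable (fun u : ℤ => ‖if Odd u then q ^ (m * u ^ 2) else (0 : ℂ)‖) := by
      refine Summable.of_nonneg_of_le (fun u => norm_nonneg _) (fun u => ?_) hFm
      split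
      · exact le_refl _
      · simp only [norm_zero]; exact norm_nonneg _
    have hg_norm : Summable (fun v : ℤ => ‖(-(q ^ k)) ^ (v ^ 2)‖) := by
      have := aux_summable_norm hq0 hq _ (he_sq hk)
      refine this.congr fun v => ?_
      rw [norm_zpow, norm_zpow, norm_neg, norm_zpow, ← zpow_mul]
    have key4 : (∑' p : ℤ × ℤ,
        (if Odd p.1 then q ^ (m * p.1 ^ 2) else 0) * (-(q ^ k)) ^ (p.2 ^ 2)) =
        (∑' u : ℤ, (if Odd u then q ^ (m * u ^ 2) else 0)) * phi (-(q ^ k)) := by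
      rw [phi, ← tsum_mul_tsum_of_summable_norm hf_norm hg_norm]
    -- step 5 : the odd theta sum equals 2 q^m psi (q^(8m))
    have hA : Summable (fun n : ℤ => ‖q ^ (4 * m * (n ^ 2 + n))‖) :=
      aux_summable_norm hq0 hq _ (he_A hm)
    have key5 : (∑' u : ℤ, (if Odd u then q ^ (m * u ^ 2) else 0)) =
        2 * (q ^ m * psi (q ^ (8 * m))) := by
      -- reindex the odd integers by n ↦ 2n+1
      have hinj : Function.Injective (fun n : ℤ => 2 * n + 1) := by
        intro a b h; simp only [] at h; omega
      have hsupp : Function.support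
          (fun u : ℤ => (if Odd u then q ^ (m * u ^ 2) else 0)) ⊆
          Set.range (fun n : ℤ => 2 * n + 1) := by
        intro u hu
        rw [Function.mem_support] at hu
        have hou : Odd u := by
          by_contra h
          simp [h] at hu
        obtain ⟨c, hc⟩ := hou
        exact ⟨c, show 2 * c + 1 = u by omega⟩
      rw [← hinj.tsum_eq hsupp]
      have step : (∑' n : ℤ, (if Odd (2 * n + 1) then q ^ (m * (2 * n + 1) ^ 2) else 0)) =
          q ^ m * ∑' n : ℤ, q ^ (4 * m * (n ^ 2 + n)) := by
        rw [← tsum_mul_left]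
        refine tsum_congr fun n => ?_
        rw [if_pos ⟨n, by ring⟩, ← zpow_add₀ hq0]
        congr 1
        ring
      rw [step]
      -- now split the sum over n by parity
      have hodd_sum : Summable (fun n : ℤ =>
          (if Odd n then q ^ (4 * m * (n ^ 2 + n)) else 0)) := by
        refine Summable.of_norm_bounded hA fun n => ?_
        split
        · exact le_refl _
        · simp only [norm_zero]; exact norm_nonneg _
      have heven_sum : Summable (fun n : ℤ =>
          (if Even n then q ^ (4 * m * (n ^ 2 + n)) else 0)) := by
        refine Summable.of_norm_bounded hA fun n => ?_
        split
        · exact le_refl _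
        · simp only [norm_zero]; exact norm_nonneg _
      have hsplit : (∑' n : ℤ, q ^ (4 * m * (n ^ 2 + n))) =
          (∑' n : ℤ, (if Odd n then q ^ (4 * m * (n ^ 2 + n)) else 0)) +
          (∑' n : ℤ, (if Even n then q ^ (4 * m * (n ^ 2 + n)) else 0)) := by
        rw [← Summable.tsum_add hodd_sum heven_sum]
        refine tsum_congr fun n => ?_
        rcases Int.even_or_odd n with h | h
        · rw [if_neg (by simpa [Int.not_odd_iff_even] using h), if_pos h, zero_add]
        · rw [if_pos h, if_neg (by simpa [Int.not_even_iff_odd] using h), add_zero]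
      have hoddpart : (∑' n : ℤ, (if Odd n then q ^ (4 * m * (n ^ 2 + n)) else 0)) =
          psi (q ^ (8 * m)) := by
        have hinj2 : Function.Injective (fun n : ℤ => 2 * n - 1) := by
          intro a b h; simp only [] at h; omega
        have hsupp2 : Function.support
            (fun n : ℤ => (if Odd n then q ^ (4 * m * (n ^ 2 + n)) else 0)) ⊆
            Set.range (fun n : ℤ => 2 * n - 1) := by
          intro u hu
          rw [Function.mem_support] at hu
          have hou : Odd u := by
            by_contra h
            simp [h] at hu
          obtain ⟨c, hc⟩ := hou
          exact ⟨c + 1, show 2 * (c + 1) - 1 = u by omega⟩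
        rw [← hinj2.tsum_eq hsupp2, psi]
        refine tsum_congr fun n => ?_
        rw [if_pos ⟨n - 1, by ring⟩, ← zpow_mul]
        congr 1
        ring
      have hevenpart : (∑' n : ℤ, (if Even n then q ^ (4 * m * (n ^ 2 + n)) else 0)) =
          psi (q ^ (8 * m)) := by
        have hinj2 : Function.Injective (fun n : ℤ => -(2 * n)) := by
          intro a b h; simp only [] at h; omega
        have hsupp2 : Function.support
            (fun n : ℤ => (if Even n then q ^ (4 * m * (n ^ 2 + n)) else 0)) ⊆
            Set.range (fun n : ℤ => -(2 * n)) := by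
          intro u hu
          rw [Function.mem_support] at hu
          have hou : Even u := by
            by_contra h
            simp [h] at hu
          obtain ⟨c, hc⟩ := hou
          exact ⟨-c, show -(2 * -c) = u by omega⟩
        rw [← hinj2.tsum_eq hsupp2, psi]
        refine tsum_congr fun n => ?_
        rw [if_pos ⟨-n, by ring⟩]
        rw [← zpow_mul]
        congr 1
        ring
      rw [hsplit, hoddpart, hevenpart]
      ring
    rw [key1, key2, key3, key4, key5]
    ring
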